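/- Let X be a compact metrizable ANR with a fixed metric ρ, let Y be compact metrizable, Z ⊆ Y closed, and suppose continuous maps φₙ : Z → X converge uniformly on Z to φ, with φ extending to φ̄ : Y → X. Then for all sufficiently large n there exist extensions φ̄ₙ : Y → X of φₙ such that φ̄ₙ → φ̄ uniformly on Y. -/

import Mathlib

open Set Filter

/-- `X` is an ANR: every map into `X` from a closed subspace of a compact metrizable space
extends to an open neighborhood. -/
def IsANR (X : Type*) [TopologicalSpace X] : Prop :=
  ∀ (Y : Type) [MetricSpace Y] [CompactSpace Y] (Z : Set Y), IsClosed Z →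
    ∀ φ : C(Z, X), ∃ U : Set Y, IsOpen U ∧ Z ⊆ U ∧
      ∃ g : C(U, X), ∀ (y : Y) (hz : y ∈ Z) (hu : y ∈ U), g ⟨y, hu⟩ = φ ⟨y, hz⟩

noncomputable section
namespace ANRAux

def seqS (n : ℕ) : ℝ := 1 / (n + 1)

lemma seqS_pos (n : ℕ) : 0 < seqS n := by unfold seqS; positivity

lemma seqS_anti : StrictAnti seqS := by
  intro m n h
  unfold seqS
  apply one_div_lt_one_div_of_lt (by positivity)
  have : (m : ℝ) < n := by exact_mod_cast h
  linarith

lemma seqS_inj : Function.Injective seqS := seqS_anti.injective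

lemma tendsto_seqS : Tendsto seqS atTop (nhds 0) := by
  unfold seqS; exact tendsto_one_div_add_atTop_nhds_zero_nat

def Sset : Set ℝ := insert 0 (Set.range seqS)

lemma isCompact_Sset : IsCompact Sset := tendsto_seqS.isCompact_insert_range

lemma gap_lemma (n : ℕ) : ∃ g > 0, ∀ s ∈ Sset, |s - seqS n| < g → s = seqS n := by
  refine ⟨seqS n - seqS (n + 1), by have := seqS_anti (Nat.lt_succ_self n); linarith, ?_⟩
  rintro s (rfl | ⟨m, rfl⟩) h
  · exfalso
    rw [abs_sub_comm, abs_of_pos (by simpa using seqS_pos n)] at h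
    have := seqS_pos (n + 1); linarith
  · rcases lt_trichotomy m n with hmn | rfl | hmn
    · exfalso
      have h1 : seqS n < seqS m := seqS_anti hmn
      rw [abs_of_pos (by linarith)] at h
      have h2 : seqS (n-1) ≤ seqS m := by
        rcases eq_or_lt_of_le (Nat.le_sub_one_of_lt hmn) with he | hl
        · rw [he]
        · exact le_of_lt (seqS_anti hl)
      have hn1 : 1 ≤ n := Nat.one_le_iff_ne_zero.mpr (by rintro rfl; omega)
      have h3 : seqS (n-1) - seqS n ≥ seqS n - seqS (n+1) := by
        have hc : ((n - 1 : ℕ) : ℝ) = (n : ℝ) - 1 := by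
          push_cast [Nat.cast_sub hn1]; ring
        unfold seqS
        rw [hc]
        have hnr : (1:ℝ) ≤ (n:ℝ) := by exact_mod_cast hn1
        rw [div_sub_div _ _ (by linarith) (by linarith), div_sub_div _ _ (by linarith) (by linarith)]
        rw [ge_iff_le, div_le_div_iff₀ (by nlinarith) (by nlinarith)]
        push_cast
        nlinarith
      linarith
    · rfl
    · exfalso
      have h1 : seqS m < seqS n := seqS_anti hmn
      rw [abs_sub_comm, abs_of_pos (by linarith)] at h
      have h2 : seqS m ≤ seqS (n+1) := by
        rcases eq_or_lt_of_le (Nat.succ_le_of_lt hmn) with he | hl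
        · rw [← he]
        · exact le_of_lt (seqS_anti hl)
      linarith

lemma small_lemma (M : ℕ) : ∀ s ∈ Sset, |s| < seqS M → s = 0 ∨ ∃ m ≥ M, s = seqS m := by
  rintro s (rfl | ⟨m, rfl⟩) h
  · exact Or.inl rfl
  · refine Or.inr ⟨m, ?_, rfl⟩
    rw [abs_of_pos (seqS_pos m)] at h
    by_contra hc
    exact absurd (seqS_anti.le_iff_ge.mp (le_of_lt h)) (by omega)

lemma exists_idx (s : ↥Sset) (h : s.1 ≠ 0) : ∃ n, seqS n = s.1 := s.2.resolve_left h
def idx (s : ↥Sset) (h : s.1 ≠ 0) : ℕ := (exists_idx s h).choose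
lemma idx_spec (s : ↥Sset) (h : s.1 ≠ 0) : seqS (idx s h) = s.1 := (exists_idx s h).choose_spec

variable {X Y : Type} [MetricSpace X] [MetricSpace Y]

def Aset (Z : Set Y) : Set (Y × ↥Sset) := {p | p.1 ∈ Z ∨ p.2.1 = 0}

lemma isClosed_Aset {Z : Set Y} (hZ : IsClosed Z) : IsClosed (Aset Z) := by
  have h1 : IsClosed ((fun p : Y × ↥Sset => p.1) ⁻¹' Z) := hZ.preimage continuous_fst
  have h2 : IsClosed ((fun p : Y × ↥Sset => p.2.1) ⁻¹' {0}) :=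
    isClosed_singleton.preimage (continuous_subtype_val.comp continuous_snd)
  exact h1.union h2

def Phi (Z : Set Y) (φ : ℕ → C(Z, X)) (φbar : C(Y, X)) : ↥(Aset Z) → X :=
  fun a => if h : a.1.2.1 = 0 then φbar a.1.1
    else φ (idx a.1.2 h) ⟨a.1.1, (a.2 : a.1.1 ∈ Z ∨ a.1.2.1 = 0).resolve_right h⟩

lemma dist_fst_le (a b : ↥(Aset (Y := Y) Z)) : dist a.1.1 b.1.1 ≤ dist a b := by
  rw [Subtype.dist_eq, Prod.dist_eq]; exact le_max_left _ _

lemma dist_snd_le (a b : ↥(Aset (Y := Y) Z)) : |a.1.2.1 - b.1.2.1| ≤ dist a b := by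
  rw [Subtype.dist_eq, Prod.dist_eq]
  calc |a.1.2.1 - b.1.2.1| = dist a.1.2 b.1.2 := by rw [Subtype.dist_eq, Real.dist_eq]
  _ ≤ _ := le_max_right _ _

lemma continuous_Phi (Z : Set Y) (φ : ℕ → C(Z, X)) (φl : C(Z, X))
    (hconv : TendstoUniformly (fun n => ⇑(φ n)) (⇑φl) atTop)
    (φbar : C(Y, X)) (hφbar : ∀ z : Z, φbar z.1 = φl z) :
    Continuous (Phi Z φ φbar) := by
  rw [Metric.continuous_iff]
  intro a ε hε
  by_cases h0 : a.1.2.1 = 0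
  · have hε3 : 0 < ε / 3 := by linarith
    obtain ⟨M, hM⟩ := eventually_atTop.mp (Metric.tendstoUniformly_iff.mp hconv (ε/3) hε3)
    obtain ⟨δ₁, hδ₁pos, hδ₁⟩ := Metric.continuous_iff.mp φbar.continuous a.1.1 (ε/3) hε3
    refine ⟨min δ₁ (seqS M), lt_min hδ₁pos (seqS_pos M), ?_⟩
    intro b hb
    have hb1 : dist b.1.1 a.1.1 < δ₁ :=
      lt_of_le_of_lt (dist_fst_le b a) (lt_of_lt_of_le hb (min_le_left _ _))
    have hb2 : |b.1.2.1| < seqS M := by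
      have := lt_of_le_of_lt (dist_snd_le b a) (lt_of_lt_of_le hb (min_le_right _ _))
      rwa [h0, sub_zero] at this
    unfold Phi
    rw [dif_pos h0]
    rcases small_lemma M b.1.2.1 b.1.2.2 hb2 with hb0 | ⟨m, hm, hbm⟩
    · rw [dif_pos hb0]
      exact lt_of_lt_of_le (hδ₁ _ hb1) (by linarith)
    · have hbne : b.1.2.1 ≠ 0 := by rw [hbm]; exact (seqS_pos m).ne'
      rw [dif_neg hbne]
      have hk : idx b.1.2 hbne = m := seqS_inj (by rw [idx_spec]; exact hbm)
      set zb : Z := ⟨b.1.1, (b.2 : b.1.1 ∈ Z ∨ b.1.2.1 = 0).resolve_right hbne⟩ with hzb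
      calc dist (φ (idx b.1.2 hbne) zb) (φbar a.1.1)
          ≤ dist (φ (idx b.1.2 hbne) zb) (φl zb) + dist (φl zb) (φbar a.1.1) :=
            dist_triangle _ _ _
        _ < ε/3 + ε/3 := by
            apply add_lt_add
            · rw [dist_comm]; exact hM (idx b.1.2 hbne) (hk ▸ hm) zb
            · rw [← hφbar zb]
              exact hδ₁ b.1.1 hb1
        _ ≤ ε := by linarith
  · have hzA : a.1.1 ∈ Z := (a.2 : a.1.1 ∈ Z ∨ a.1.2.1 = 0).resolve_right h0
    obtain ⟨δ₁, hδ₁pos, hδ₁⟩ :=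
      Metric.continuous_iff.mp (φ (idx a.1.2 h0)).continuous ⟨a.1.1, hzA⟩ ε hε
    obtain ⟨gp, hgp, hgap⟩ := gap_lemma (idx a.1.2 h0)
    refine ⟨min δ₁ gp, lt_min hδ₁pos hgp, ?_⟩
    intro b hb
    have hb1 : dist b.1.1 a.1.1 < δ₁ :=
      lt_of_le_of_lt (dist_fst_le b a) (lt_of_lt_of_le hb (min_le_left _ _))
    have hb2 : |b.1.2.1 - seqS (idx a.1.2 h0)| < gp := by
      have := lt_of_le_of_lt (dist_snd_le b a) (lt_of_lt_of_le hb (min_le_right _ _))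
      rwa [idx_spec a.1.2 h0]
    have hbeq : b.1.2.1 = seqS (idx a.1.2 h0) := hgap _ b.1.2.2 hb2
    have hbne : b.1.2.1 ≠ 0 := by rw [hbeq]; exact (seqS_pos _).ne'
    unfold Phi
    rw [dif_neg h0, dif_neg hbne]
    have hk : idx b.1.2 hbne = idx a.1.2 h0 := seqS_inj (by rw [idx_spec]; exact hbeq)
    rw [hk]
    apply hδ₁
    calc dist ((⟨b.1.1, _⟩ : Z) : Y) a.1.1 = dist b.1.1 a.1.1 := rfl
    _ < δ₁ := hb1
end ANRAux


open ANRAux in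
/-- If `X` is an ANR and `φₙ → φ` uniformly on `Z` with `φ` extending to `φ̄ : Y → X`, then for
all sufficiently large `n` there are extensions `φ̄ₙ` of `φₙ` with `φ̄ₙ → φ̄` uniformly on `Y`. -/
theorem isANR_extensions_converge {X : Type} [MetricSpace X] [CompactSpace X] (hX : IsANR X)
    {Y : Type} [MetricSpace Y] [CompactSpace Y] (Z : Set Y) (hZ : IsClosed Z)
    (φ : ℕ → C(Z, X)) (φl : C(Z, X))
    (hconv : TendstoUniformly (fun n => ⇑(φ n)) (⇑φl) atTop)
    (φbar : C(Y, X)) (hφbar : ∀ z : Z, φbar z.1 = φl z) :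
    ∃ (N : ℕ) (ψ : ℕ → C(Y, X)),
      (∀ n ≥ N, ∀ z : Z, ψ n z.1 = φ n z) ∧
      TendstoUniformly (fun n => ⇑(ψ n)) (⇑φbar) atTop := by
  classical
  haveI : CompactSpace ↥Sset := isCompact_iff_compactSpace.mp isCompact_Sset
  obtain ⟨U, hUopen, hAU, g, hg⟩ := hX (Y × ↥Sset) (Aset Z) (isClosed_Aset hZ)
    ⟨Phi Z φ φbar, continuous_Phi Z φ φl hconv φbar hφbar⟩
  set sElem : ℕ → ↥Sset := fun n => ⟨seqS n, mem_insert_of_mem _ ⟨n, rfl⟩⟩ with hsElem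
  set s0 : ↥Sset := ⟨0, mem_insert _ _⟩ with hs0
  -- find N such that the slices Y × {seqS n} lie in U for n ≥ N
  have hNex : ∃ N, ∀ n ≥ N, ∀ y : Y, ((y, sElem n) : Y × ↥Sset) ∈ U := by
    by_cases hUc : Uᶜ = ∅
    · refine ⟨0, fun n _ y => ?_⟩
      have : U = univ := by
        rw [← compl_empty, ← hUc, compl_compl]
      rw [this]; trivial
    · obtain ⟨p0, hp0⟩ := nonempty_iff_ne_empty.mpr hUc
      have hK : IsCompact Uᶜ := hUopen.isClosed_compl.isCompact
      obtain ⟨pmin, hpminmem, hpmin⟩ := hK.exists_isMinOn ⟨p0, hp0⟩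
        ((continuous_subtype_val.comp continuous_snd).continuousOn)
      have hpne : pmin.2.1 ≠ 0 := by
        intro h
        exact hpminmem (hAU (Or.inr h))
      have hpε : 0 < pmin.2.1 := by
        rcases pmin.2.2 with h | ⟨m, hm⟩
        · exact absurd h hpne
        · rw [← hm]; exact seqS_pos m
      obtain ⟨N, hN⟩ := (tendsto_seqS.eventually (gt_mem_nhds hpε)).exists
      refine ⟨N, fun n hn y => ?_⟩
      by_contra h
      have := isMinOn_iff.mp hpmin _ h
      have h1 : seqS n ≤ seqS N := seqS_anti.antitone hn
      simp only [hsElem] at this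
      dsimp at this
      linarith
  obtain ⟨N, hN⟩ := hNex
  set ψ : ℕ → C(Y, X) := fun n =>
    if h : ∀ y : Y, ((y, sElem n) : Y × ↥Sset) ∈ U then
      ⟨fun y => g ⟨(y, sElem n), h y⟩, by
        exact g.continuous.comp (Continuous.subtype_mk (continuous_id.prodMk continuous_const) _)⟩
    else φbar with hψ
  have hψ_eq : ∀ n (hn : n ≥ N), ∀ y : Y, ψ n y = g ⟨(y, sElem n), hN n hn y⟩ := by
    intro n hn y
    simp only [hψ, dif_pos (hN n hn)]
    rfl
  refine ⟨N, ψ, ?_, ?_⟩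
  · intro n hn z
    rw [hψ_eq n hn z.1]
    have hmemA : ((z.1, sElem n) : Y × ↥Sset) ∈ Aset Z := Or.inl z.2
    rw [hg (z.1, sElem n) hmemA (hN n hn z.1)]
    show Phi Z φ φbar ⟨(z.1, sElem n), hmemA⟩ = φ n z
    unfold Phi
    have hne : (sElem n).1 ≠ 0 := (seqS_pos n).ne'
    rw [dif_neg hne]
    have hk : idx (sElem n) hne = n := seqS_inj (idx_spec (sElem n) hne)
    rw [hk]
  · -- uniform convergence
    set SsetN : Set ℝ := insert 0 (Set.range fun m => seqS (m + N)) with hSsetN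
    have hSsetNc : IsCompact SsetN := by
      apply Filter.Tendsto.isCompact_insert_range
      exact tendsto_seqS.comp (tendsto_atTop_mono (fun m => Nat.le_add_right m N) tendsto_id)
    set KS : Set ↥Sset := Subtype.val ⁻¹' SsetN with hKS
    have hKSclosed : IsClosed KS := hSsetNc.isClosed.preimage continuous_subtype_val
    set K : Set (Y × ↥Sset) := univ ×ˢ KS with hK
    have hKc : IsCompact K := isCompact_univ.prod hKSclosed.isCompact
    have hKU : K ⊆ U := by
      rintro p ⟨-, hp2⟩
      rcases hp2 with h | ⟨m, hm⟩
      · exact hAU (Or.inr h)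
      · have hpe : p = (p.1, sElem (m + N)) := Prod.ext rfl (Subtype.ext hm.symm)
        rw [hpe]
        exact hN (m + N) (Nat.le_add_left N m) p.1
    haveI : CompactSpace ↥K := isCompact_iff_compactSpace.mp hKc
    set G : ↥K → X := fun k => g ⟨k.1, hKU k.2⟩ with hG
    have hGc : Continuous G :=
      g.continuous.comp (Continuous.subtype_mk continuous_subtype_val _)
    have hGu : UniformContinuous G := CompactSpace.uniformContinuous_of_continuous hGc
    rw [Metric.tendstoUniformly_iff]
    intro ε hε
    obtain ⟨δ, hδpos, hδ⟩ := Metric.uniformContinuous_iff.mp hGu ε hε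
    obtain ⟨N₂, hN₂⟩ := (tendsto_seqS.eventually (gt_mem_nhds hδpos)).exists
    refine eventually_atTop.mpr ⟨max N N₂, fun n hn y => ?_⟩
    have hnN : n ≥ N := le_trans (le_max_left _ _) hn
    have hnN₂ : n ≥ N₂ := le_trans (le_max_right _ _) hn
    have hk0mem : ((y, s0) : Y × ↥Sset) ∈ K := mk_mem_prod (mem_univ _) (mem_insert _ _)
    have hk1mem : ((y, sElem n) : Y × ↥Sset) ∈ K :=
      mk_mem_prod (mem_univ _)
        (mem_insert_of_mem _ ⟨n - N, by simp only [hsElem]; rw [Nat.sub_add_cancel hnN]⟩)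
    set k0 : ↥K := ⟨(y, s0), hk0mem⟩ with hk0
    set k1 : ↥K := ⟨(y, sElem n), hk1mem⟩ with hk1
    have hdk : dist k0 k1 < δ := by
      rw [Subtype.dist_eq, Prod.dist_eq]
      simp only [hk0, hk1]
      rw [Subtype.dist_eq]
      rw [dist_self, Real.dist_eq]
      have h1 : |0 - seqS n| = seqS n := by
        rw [zero_sub, abs_neg, abs_of_pos (seqS_pos n)]
      rw [h1, max_eq_right (le_of_lt (seqS_pos n))]
      calc seqS n ≤ seqS N₂ := seqS_anti.antitone hnN₂
        _ < δ := hN₂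
    have e0 : G k0 = φbar y := by
      have hmemA : ((y, s0) : Y × ↥Sset) ∈ Aset Z := Or.inr rfl
      show g ⟨(y, s0), hKU hk0mem⟩ = φbar y
      rw [hg (y, s0) hmemA (hKU hk0mem)]
      show Phi Z φ φbar ⟨(y, s0), hmemA⟩ = φbar y
      unfold Phi
      rw [dif_pos rfl]
    have e1 : G k1 = ψ n y := by
      rw [hψ_eq n hnN y]
    rw [← e0, ← e1]
    exact hδ hdk
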